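/- Let N ≥ 1, 2 < q ≤ p̄ < p < 2*, a > 0, μ < 0. If u ∈ S_a satisfies P_μ(u) = |∇u|₂² − γ_p|u|_p^p − μγ_q|u|_q^q = 0, then |∇u|₂² ≤ γ_p|u|_p^p ≤ γ_p C_{N,p}^p a^{(1−γ_p)p} |∇u|₂^{γ_p p}, hence |∇u|₂ ≥ (γ_p C_{N,p}^p a^{(1−γ_p)p})^{−1/(γ_p p − 2)}, and E_μ(u) = ½(1 − 2/(γ_p p))|∇u|₂² − (μ/q)(1 − γ_q q/(γ_p p))|u|_q^q ≥ ½(1 − 2/(γ_p p))|∇u|₂². In particular m(a,μ) = inf_{P_{a,μ}} E_μ > 0. -/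

import Mathlib

set_option maxHeartbeats 2000000 in
/-- Lower bounds on the Pohozaev manifold for `2 < q ≤ p̄ < p < 2*`, `a > 0`, `μ < 0`.
For `u ∈ S_a` write `G = |∇u|₂ ≥ 0`, `Pp = |u|_p^p ≥ 0`, `Qq = |u|_q^q > 0`, with the
Gagliardo–Nirenberg bound `Pp ≤ C_{N,p}^p G^{γ_p p} a^{(1−γ_p)p}`.  If the Pohozaev
constraint `G² − γ_p Pp − μγ_q Qq = 0` holds, then `G² ≤ γ_p Pp ≤
γ_p C_{N,p}^p a^{(1−γ_p)p} G^{γ_p p}`, hence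
`G ≥ (γ_p C_{N,p}^p a^{(1−γ_p)p})^{−1/(γ_p p − 2)}`, and
`E_μ(u) ≥ ½(1 − 2/(γ_p p))G²`, so `E_μ(u) > 0`; in particular
`m(a,μ) = inf_{P_{a,μ}} E_μ > 0`. -/
theorem stmt14 (N : ℕ) (hN : 1 ≤ N) (a μ q p pbar γp γq Cp : ℝ)
    (hpbar : pbar = 2 + 4 / (N : ℝ)) (hγp : γp = (N : ℝ) * (p - 2) / (2 * p))
    (hγq : γq = (N : ℝ) * (q - 2) / (2 * q))
    (hq : 2 < q) (hqp : q ≤ pbar) (hp : pbar < p)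
    (hp2s : N ≤ 2 ∨ p < 2 * (N : ℝ) / ((N : ℝ) - 2))
    (ha : 0 < a) (hμ : μ < 0) (hCp : 0 < Cp)
    (G Pp Qq E : ℝ)
    (hG : 0 ≤ G) (hPp : 0 ≤ Pp) (hQq : 0 < Qq)
    (hGNp : Pp ≤ Cp ^ p * G ^ (γp * p) * a ^ ((1 - γp) * p))
    (hE : E = G ^ 2 / 2 - Pp / p - μ * Qq / q)
    (hPoh : G ^ 2 - γp * Pp - μ * γq * Qq = 0) :
    G ^ 2 ≤ γp * Pp ∧
    γp * Pp ≤ γp * Cp ^ p * a ^ ((1 - γp) * p) * G ^ (γp * p) ∧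
    (γp * Cp ^ p * a ^ ((1 - γp) * p)) ^ (-(1 / (γp * p - 2))) ≤ G ∧
    (1 / 2) * (1 - 2 / (γp * p)) * G ^ 2 ≤ E ∧
    0 < E := by
  have hN0 : (0:ℝ) < N := by exact_mod_cast hN
  have h4N : (0:ℝ) < 4 / N := by positivity
  have hp0 : (2:ℝ) < p := by rw [hpbar] at hp; linarith
  have hpp : (0:ℝ) < p := by linarith
  have hq0 : (0:ℝ) < q := by linarith
  have hγp0 : 0 < γp := by
    rw [hγp]; exact div_pos (mul_pos hN0 (by linarith)) (by linarith)
  have hγq0 : 0 < γq := by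
    rw [hγq]; exact div_pos (mul_pos hN0 (by linarith)) (by linarith)
  have hsp : γp * p = (N:ℝ) * (p - 2) / 2 := by rw [hγp]; field_simp
  have hsq : γq * q = (N:ℝ) * (q - 2) / 2 := by rw [hγq]; field_simp
  have hs2 : 2 < γp * p := by
    rw [hsp]
    have hpl : 2 + 4 / (N:ℝ) < p := by rw [hpbar] at hp; exact hp
    have h1 : (N:ℝ) * (4 / N) < (N:ℝ) * (p - 2) :=
      mul_lt_mul_of_pos_left (by linarith) hN0
    have hN4 : (N:ℝ) * (4 / N) = 4 := by field_simp
    linarith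
  have hsq2 : γq * q ≤ 2 := by
    rw [hsq]
    have hql : q ≤ 2 + 4 / (N:ℝ) := by rw [hpbar] at hqp; exact hqp
    have h1 : (N:ℝ) * (q - 2) ≤ (N:ℝ) * (4 / N) :=
      mul_le_mul_of_nonneg_left (by linarith) hN0.le
    have hN4 : (N:ℝ) * (4 / N) = 4 := by field_simp
    linarith
  have h1 : G ^ 2 ≤ γp * Pp := by nlinarith [mul_pos hγq0 hQq]
  have h2 : γp * Pp ≤ γp * Cp ^ p * a ^ ((1 - γp) * p) * G ^ (γp * p) := by
    calc γp * Pp ≤ γp * (Cp ^ p * G ^ (γp * p) * a ^ ((1 - γp) * p)) :=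
          mul_le_mul_of_nonneg_left hGNp hγp0.le
    _ = γp * Cp ^ p * a ^ ((1 - γp) * p) * G ^ (γp * p) := by ring
  have hGpos : 0 < G := by
    rcases eq_or_lt_of_le hG with h | h
    · exfalso
      have hz : G ^ (γp * p) = 0 := by
        rw [← h]; exact Real.zero_rpow (by positivity)
      have hPp0 : Pp ≤ 0 := by
        calc Pp ≤ Cp ^ p * G ^ (γp * p) * a ^ ((1 - γp) * p) := hGNp
        _ = 0 := by rw [hz]; ring
      have hG20 : G ^ 2 = 0 := by rw [← h]; ring
      nlinarith [mul_pos hγq0 hQq]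
    · exact h
  set K := γp * Cp ^ p * a ^ ((1 - γp) * p) with hKdef
  have hK0 : 0 < K := by rw [hKdef]; positivity
  have hexp : 0 < γp * p - 2 := by linarith
  have h3 : K ^ (-(1 / (γp * p - 2))) ≤ G := by
    have hGs : G ^ 2 ≤ K * G ^ (γp * p) := le_trans h1 h2
    have hsplit : G ^ (γp * p) = G ^ (2:ℝ) * G ^ (γp * p - 2) := by
      rw [← Real.rpow_add hGpos]; ring_nf
    have hG2 : G ^ ((2:ℝ)) = G ^ 2 := by
      rw [show ((2:ℝ)) = ((2:ℕ):ℝ) by norm_num, Real.rpow_natCast]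
    have hG2pos : 0 < G ^ 2 := by positivity
    rw [hsplit, hG2] at hGs
    have hone : 1 ≤ K * G ^ (γp * p - 2) := by
      have heq : K * (G ^ 2 * G ^ (γp * p - 2)) = G ^ 2 * (K * G ^ (γp * p - 2)) := by ring
      have h' : G ^ 2 * 1 ≤ G ^ 2 * (K * G ^ (γp * p - 2)) := by rw [mul_one]; linarith
      exact (mul_le_mul_iff_right₀ hG2pos).1 h'
    have hinv : K⁻¹ ≤ G ^ (γp * p - 2) := by
      rw [inv_eq_one_div, div_le_iff₀ hK0, mul_comm]; exact hone
    have hepos : 0 < 1 / (γp * p - 2) := by positivity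
    have hstep := Real.rpow_le_rpow (by positivity) hinv hepos.le
    have hR : (G ^ (γp * p - 2)) ^ (1 / (γp * p - 2)) = G := by
      rw [← Real.rpow_mul hGpos.le, mul_one_div, div_self hexp.ne', Real.rpow_one]
    have hL : (K⁻¹) ^ (1 / (γp * p - 2)) = K ^ (-(1 / (γp * p - 2))) := by
      rw [Real.rpow_neg hK0.le, Real.inv_rpow hK0.le]
    rwa [hL, hR] at hstep
  have hPpe : Pp = (G ^ 2 - μ * γq * Qq) / γp := by
    field_simp; linarith [hPoh]
  have h4 : (1 / 2) * (1 - 2 / (γp * p)) * G ^ 2 ≤ E := by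
    rw [hE, hPpe, ← sub_nonneg]
    have hid : G ^ 2 / 2 - (G ^ 2 - μ * γq * Qq) / γp / p - μ * Qq / q -
        (1 / 2) * (1 - 2 / (γp * p)) * G ^ 2
        = (-μ) * Qq * (γp * p - γq * q) / (γp * p * q) := by
      field_simp; ring
    rw [hid]
    apply div_nonneg _ (by positivity)
    exact mul_nonneg (mul_nonneg (by linarith) hQq.le) (by linarith)
  have hc : 0 < (1 / 2) * (1 - 2 / (γp * p)) := by
    have h21 : 2 / (γp * p) < 1 := by
      rw [div_lt_one (by linarith)]; exact hs2
    linarith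
  have h5 : 0 < E := lt_of_lt_of_le (by positivity) h4
  exact ⟨h1, h2, h3, h4, h5⟩
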